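/- Let a > 0 and let M and N be real m × n matrices (m ≤ n) satisfying M·Nᵀ = 0 and Mᵀ·N = 0. Then P_a(M + N) = P_a(M) + P_a(N). -/

import Mathlib

open Matrix Filter

/-- The singular values of a real `m × n` matrix: square roots of the eigenvalues of `X * Xᵀ`. -/
noncomputable def sv {m n : ℕ} (X : Matrix (Fin m) (Fin n) ℝ) : Fin m → ℝ :=
  fun i => Real.sqrt ((Matrix.isHermitian_mul_conjTranspose_self X).eigenvalues i)

/-- The singular values arranged in descending order: `svSorted X 0 ≥ svSorted X 1 ≥ ⋯`. -/
noncomputable def svSorted {m n : ℕ} (X : Matrix (Fin m) (Fin n) ℝ) : Fin m → ℝ :=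
  fun i => sv X (Tuple.sort (sv X) i.rev)

/-- `P_a(X) = Σᵢ a σᵢ(X)/(a σᵢ(X) + 1)`. -/
noncomputable def Pa {m n : ℕ} (a : ℝ) (X : Matrix (Fin m) (Fin n) ℝ) : ℝ :=
  ∑ i, a * sv X i / (a * sv X i + 1)

/-- Frobenius norm. -/
noncomputable def frobNorm {m n : ℕ} (X : Matrix (Fin m) (Fin n) ℝ) : ℝ :=
  Real.sqrt (∑ i, ∑ j, (X i j) ^ 2)

/-- Nuclear norm: the sum of the singular values. -/
noncomputable def nuclearNorm {m n : ℕ} (X : Matrix (Fin m) (Fin n) ℝ) : ℝ :=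
  ∑ i, sv X i

/-- The rectangular `m × n` "diagonal" matrix with diagonal entries `σ`. -/
def diagRect {m n : ℕ} (σ : Fin m → ℝ) : Matrix (Fin m) (Fin n) ℝ :=
  Matrix.of fun i j => if (j : ℕ) = (i : ℕ) then σ i else 0

/-- The `r`-restricted isometry constant `δ_r(𝒜)`. -/
noncomputable def ripConst {m n d : ℕ}
    (A : Matrix (Fin m) (Fin n) ℝ →ₗ[ℝ] EuclideanSpace ℝ (Fin d)) (r : ℕ) : ℝ :=
  sInf {δ : ℝ | 0 ≤ δ ∧ ∀ X : Matrix (Fin m) (Fin n) ℝ, X.rank ≤ r →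
    (1 - δ) * frobNorm X ^ 2 ≤ ‖A X‖ ^ 2 ∧ ‖A X‖ ^ 2 ≤ (1 + δ) * frobNorm X ^ 2}

lemma detKey {k : ℕ} {H : Matrix (Fin k) (Fin k) ℝ} (hH : H.IsHermitian) (x : ℝ) :
    (x • (1 : Matrix (Fin k) (Fin k) ℝ) - H).det = ∏ i, (x - hH.eigenvalues i) := by
  set U := (hH.eigenvectorUnitary : Matrix (Fin k) (Fin k) ℝ) with hUdef
  have hU : U * star U = 1 := (Matrix.mem_unitaryGroup_iff).mp hH.eigenvectorUnitary.2
  have hD : x • (1 : Matrix (Fin k) (Fin k) ℝ) - H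
      = U * (diagonal (fun i => x - hH.eigenvalues i)) * star U := by
    conv_lhs => rw [hH.spectral_theorem]
    rw [RCLike.ofReal_real_eq_id, Unitary.conjStarAlgAut_apply]
    rw [← hUdef, ← diagonal_sub, ← smul_one_eq_diagonal]
    rw [mul_sub, sub_mul, mul_smul_comm, mul_one, smul_mul_assoc, hU]
    simp
  rw [hD, det_mul, det_mul, mul_comm, ← mul_assoc, ← det_mul]
  have hU2 : star U * U = 1 := (Matrix.mem_unitaryGroup_iff').mp hH.eigenvectorUnitary.2
  rw [hU2, det_one, one_mul, det_diagonal]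

theorem statement2 (m n : ℕ) (hmn : m ≤ n) (a : ℝ) (ha : 0 < a)
    (M N : Matrix (Fin m) (Fin n) ℝ) (h1 : M * Nᵀ = 0) (h2 : Mᵀ * N = 0) :
    Pa a (M + N) = Pa a M + Pa a N := by
  classical
  set A := M * Mᴴ with hAdef
  set B := N * Nᴴ with hBdef
  have hA : A.IsHermitian := Matrix.isHermitian_mul_conjTranspose_self M
  have hB : B.IsHermitian := Matrix.isHermitian_mul_conjTranspose_self N
  have hC : ((M + N) * (M + N)ᴴ).IsHermitian :=
    Matrix.isHermitian_mul_conjTranspose_self (M + N)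
  set α := hA.eigenvalues with hα
  set β := hB.eigenvalues with hβ
  set γ := hC.eigenvalues with hγ
  have hMNt : M * Nᴴ = 0 := by rwa [Matrix.conjTranspose_eq_transpose_of_trivial]
  have hNMt : N * Mᴴ = 0 := by
    have h3 := congrArg Matrix.transpose h1
    rw [Matrix.transpose_mul, Matrix.transpose_transpose, Matrix.transpose_zero] at h3
    rw [Matrix.conjTranspose_eq_transpose_of_trivial]
    exact h3
  have hCAB : (M + N) * (M + N)ᴴ = A + B := by
    rw [Matrix.conjTranspose_add, Matrix.add_mul, Matrix.mul_add, Matrix.mul_add,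
      hMNt, hNMt, hAdef, hBdef]
    abel
  have hAB : A * B = 0 := by
    rw [hAdef, hBdef, Matrix.mul_assoc, ← Matrix.mul_assoc Mᴴ N Nᴴ,
      Matrix.conjTranspose_eq_transpose_of_trivial, h2, Matrix.zero_mul, Matrix.mul_zero]
  -- multisets of eigenvalues
  set S1 : Multiset ℝ := Finset.univ.val.map γ + Multiset.replicate m 0 with hS1
  set S2 : Multiset ℝ := Finset.univ.val.map α + Finset.univ.val.map β with hS2
  have hpoly : (S1.map fun r => Polynomial.X - Polynomial.C r).prod
      = (S2.map fun r => Polynomial.X - Polynomial.C r).prod := by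
    apply Polynomial.funext
    intro x
    have he : ∀ S : Multiset ℝ,
        ((S.map fun r => Polynomial.X - Polynomial.C r).prod).eval x
          = (S.map fun r => x - r).prod := by
      intro S
      rw [Polynomial.eval_multiset_prod, Multiset.map_map]
      simp
    rw [he, he, hS1, hS2]
    rw [Multiset.map_add, Multiset.prod_add, Multiset.map_add, Multiset.prod_add]
    rw [Multiset.map_map, Multiset.map_map, Multiset.map_map, Multiset.map_replicate,
      Multiset.prod_replicate, sub_zero]
    have eγ : (Finset.univ.val.map fun i => x - γ i).prod = ∏ i, (x - γ i) :=
      (Finset.prod_eq_multiset_prod _ _).symm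
    have eα : (Finset.univ.val.map fun i => x - α i).prod = ∏ i, (x - α i) :=
      (Finset.prod_eq_multiset_prod _ _).symm
    have eβ : (Finset.univ.val.map fun i => x - β i).prod = ∏ i, (x - β i) :=
      (Finset.prod_eq_multiset_prod _ _).symm
    simp only [Function.comp] at *
    rw [eγ, eα, eβ, ← detKey hC x, ← detKey hA x, ← detKey hB x, hCAB]
    have key1 : x ^ m * (x • (1 : Matrix (Fin m) (Fin m) ℝ) - (A + B)).det
        = (x ^ 2 • (1 : Matrix (Fin m) (Fin m) ℝ) - x • (A + B)).det := by
      have h4 : x ^ 2 • (1 : Matrix (Fin m) (Fin m) ℝ) - x • (A + B)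
          = x • (x • (1 : Matrix (Fin m) (Fin m) ℝ) - (A + B)) := by
        rw [smul_sub, smul_smul, ← sq]
      rw [h4, Matrix.det_smul, Fintype.card_fin]
    have key2 : (x • (1 : Matrix (Fin m) (Fin m) ℝ) - A) * (x • 1 - B)
        = x ^ 2 • (1 : Matrix (Fin m) (Fin m) ℝ) - x • (A + B) := by
      simp only [mul_sub, sub_mul, mul_smul_comm, smul_mul_assoc, smul_smul, smul_sub,
        smul_add, mul_one, one_mul, ← sq, hAB]
      abel
    rw [mul_comm, key1, ← key2, Matrix.det_mul]
  have hroots : S1 = S2 := by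
    have r1 := Polynomial.roots_multiset_prod_X_sub_C S1
    have r2 := Polynomial.roots_multiset_prod_X_sub_C S2
    rw [← r1, ← r2, hpoly]
  -- sum the function g over both multisets
  set g : ℝ → ℝ := fun lam => a * Real.sqrt lam / (a * Real.sqrt lam + 1) with hg
  have hsum := congrArg (fun S : Multiset ℝ => (S.map g).sum) hroots
  simp only [hS1, hS2, Multiset.map_add, Multiset.sum_add, Multiset.map_map,
    Multiset.map_replicate, Multiset.sum_replicate, Function.comp] at hsum
  have hg0 : g 0 = 0 := by simp [hg]
  rw [hg0, smul_zero, add_zero] at hsum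
  have hPa : ∀ (X : Matrix (Fin m) (Fin n) ℝ),
      Pa a X = (Finset.univ.val.map fun i =>
        g ((Matrix.isHermitian_mul_conjTranspose_self X).eigenvalues i)).sum := by
    intro X
    rw [Pa, Finset.sum_eq_multiset_sum]
    rfl
  rw [hPa, hPa, hPa]
  exact hsum
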